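/- A metric space (X,d) is totally bounded if and only if every real-valued almost uniformly continuous function on X is bounded. -/

import Mathlib

open Metric Filter

/-- A sequence is cofinally Cauchy if for every ε>0 there is an infinite index set
on which all pairwise distances are < ε. -/
def CofinallyCauchy {X : Type*} [MetricSpace X] (x : ℕ → X) : Prop :=
  ∀ ε > 0, ∃ N : Set ℕ, N.Infinite ∧ ∀ n ∈ N, ∀ j ∈ N, dist (x n) (x j) < ε

/-- A function is almost bounded if for every ε>0 there is δ>0 such that the image of
every set of diameter < δ is contained in a finite union of open ε-balls. -/
def AlmostBounded {X Y : Type*} [MetricSpace X] [MetricSpace Y] (f : X → Y) : Prop :=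
  ∀ ε > 0, ∃ δ > 0, ∀ A : Set X, EMetric.diam A < ENNReal.ofReal δ →
    ∃ B : Finset Y, f '' A ⊆ ⋃ b ∈ B, Metric.ball b ε

/-- A metric space is cofinally complete if every cofinally Cauchy sequence clusters. -/
def CofinallyComplete (X : Type*) [MetricSpace X] : Prop :=
  ∀ x : ℕ → X, CofinallyCauchy x → ∃ p : X, MapClusterPt p atTop x

/-- The local total boundedness functional. -/
noncomputable def tFun {X : Type*} [MetricSpace X] (x : X) : ℝ :=
  sSup {ε : ℝ | 0 < ε ∧ TotallyBounded (Metric.ball x ε)}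

section Aux

variable {X : Type*} [MetricSpace X]

/-- Auxiliary: iterated choice set. -/
noncomputable def sepSet (g : List X → X) : ℕ → List X
  | 0 => []
  | n + 1 => g (sepSet g n) :: sepSet g n

/-- Auxiliary: a separated sequence. -/
noncomputable def sepSeq (g : List X → X) (n : ℕ) : X := g (sepSet g n)

omit [MetricSpace X] in
lemma sepSeq_mem (g : List X → X) {m n : ℕ} (h : m < n) : sepSeq g m ∈ sepSet g n := by
  induction n with
  | zero => omega
  | succ k ih =>
    rcases Nat.lt_succ_iff_lt_or_eq.mp h with h' | h'
    · exact List.mem_cons_of_mem _ (ih h')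
    · subst h'; exact List.mem_cons_self

/-- The bump term. -/
noncomputable def bumpTerm (ε : ℝ) (c z : X) : ℝ := max 0 (1 - (4 / ε) * dist z c)

lemma bumpTerm_nonneg (ε : ℝ) (c z : X) : 0 ≤ bumpTerm ε c z := le_max_left _ _

lemma bumpTerm_le_one {ε : ℝ} (hε : 0 < ε) (c z : X) : bumpTerm ε c z ≤ 1 := by
  have h1 : 0 ≤ (4 / ε) * dist z c :=
    mul_nonneg (by positivity) dist_nonneg
  simp only [bumpTerm, max_le_iff]
  constructor <;> linarith

lemma bumpTerm_eq_zero {ε : ℝ} (hε : 0 < ε) {c z : X} (h : ε / 4 ≤ dist z c) :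
    bumpTerm ε c z = 0 := by
  have : (1 : ℝ) ≤ (4 / ε) * dist z c := by
    have := mul_le_mul_of_nonneg_left h (le_of_lt (by positivity : (0:ℝ) < 4 / ε))
    calc (1 : ℝ) = (4 / ε) * (ε / 4) := by field_simp
    _ ≤ (4 / ε) * dist z c := this
  simp only [bumpTerm]
  exact max_eq_left (by linarith)

lemma bumpTerm_continuous (ε : ℝ) (c : X) : Continuous (fun z => bumpTerm ε c z) := by
  unfold bumpTerm
  fun_prop

/-- localization: near any point at most one bump term is nonzero. -/
lemma bump_localize {ε : ℝ} (hε : 0 < ε) (xs : ℕ → X)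
    (hsep : ∀ m n : ℕ, m ≠ n → ε ≤ dist (xs m) (xs n)) (y : X) :
    ∃ n₀ : ℕ, ∀ z ∈ ball y (ε / 8), ∀ m ≠ n₀, (m : ℝ) * bumpTerm ε (xs m) z = 0 := by
  by_cases h : ∃ n, dist y (xs n) < 3 * ε / 8
  · obtain ⟨n, hn⟩ := h
    refine ⟨n, fun z hz m hm => ?_⟩
    have h1 : ε ≤ dist (xs n) (xs m) := hsep n m (Ne.symm hm)
    have h2 : dist (xs n) (xs m) ≤ dist (xs n) y + dist y (xs m) := dist_triangle _ _ _
    have h3 : dist (xs n) y = dist y (xs n) := dist_comm _ _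
    have h4 : dist y (xs m) ≤ dist y z + dist z (xs m) := dist_triangle _ _ _
    have h5 : dist y z = dist z y := dist_comm _ _
    have hz' : dist z y < ε / 8 := mem_ball.mp hz
    have : ε / 4 ≤ dist z (xs m) := by linarith
    rw [bumpTerm_eq_zero hε this, mul_zero]
  · push_neg at h
    refine ⟨0, fun z hz m _ => ?_⟩
    have h4 : dist y (xs m) ≤ dist y z + dist z (xs m) := dist_triangle _ _ _
    have h5 : dist y z = dist z y := dist_comm _ _
    have hz' : dist z y < ε / 8 := mem_ball.mp hz
    have : ε / 4 ≤ dist z (xs m) := by have := h m; linarith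
    rw [bumpTerm_eq_zero hε this, mul_zero]

end Aux

/-- X is totally bounded iff every real-valued almost uniformly continuous function on X
is bounded. -/
theorem totallyBounded_iff_auc_bounded {X : Type*} [MetricSpace X] :
    TotallyBounded (Set.univ : Set X) ↔
      ∀ f : X → ℝ, Continuous f → AlmostBounded f → ∃ M : ℝ, ∀ x, |f x| ≤ M := by
  constructor
  · -- forward: totally bounded ⇒ every almost bounded function is bounded
    intro hTB f _hc hab
    obtain ⟨δ, hδ, H⟩ := hab 1 one_pos
    obtain ⟨t, htfin, htcov⟩ := totallyBounded_iff.mp hTB (δ / 4) (by positivity)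
    have hdiam : ∀ y : X, EMetric.diam (ball y (δ / 4)) < ENNReal.ofReal δ := by
      intro y
      have h1 : EMetric.diam (ball y (δ / 4)) ≤ 2 * ENNReal.ofReal (δ / 4) := by
        rw [← Metric.emetric_ball]
        exact EMetric.diam_ball
      have h2 : (2 : ENNReal) * ENNReal.ofReal (δ / 4) = ENNReal.ofReal (2 * (δ / 4)) := by
        rw [ENNReal.ofReal_mul (by norm_num : (0:ℝ) ≤ 2)]
        norm_num
      have h3 : ENNReal.ofReal (2 * (δ / 4)) < ENNReal.ofReal δ := by
        rw [ENNReal.ofReal_lt_ofReal_iff hδ]; linarith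
      calc EMetric.diam (ball y (δ / 4)) ≤ 2 * ENNReal.ofReal (δ / 4) := h1
        _ = ENNReal.ofReal (2 * (δ / 4)) := h2
        _ < ENNReal.ofReal δ := h3
    have hbd : Bornology.IsBounded (Set.range f) := by
      have hsub : Set.range f ⊆ ⋃ y ∈ t, f '' ball y (δ / 4) := by
        rintro _ ⟨x, rfl⟩
        have := htcov (Set.mem_univ x)
        simp only [Set.mem_iUnion] at this ⊢
        obtain ⟨y, hy, hxy⟩ := this
        exact ⟨y, hy, x, hxy, rfl⟩
      refine ((Bornology.isBounded_biUnion htfin).2 fun y _ => ?_).subset hsub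
      obtain ⟨B, hB⟩ := H (ball y (δ / 4)) (hdiam y)
      refine Bornology.IsBounded.subset ?_ hB
      exact (Bornology.isBounded_biUnion B.finite_toSet).2 fun b _ => isBounded_ball
    obtain ⟨M, hM⟩ := isBounded_iff_forall_norm_le.mp hbd
    exact ⟨M, fun x => by simpa [Real.norm_eq_abs] using hM (f x) ⟨x, rfl⟩⟩
  · -- backward: contrapositive
    intro hbdd
    by_contra hTB
    -- extract a separated sequence
    obtain ⟨ε, hε, hno⟩ : ∃ ε > 0, ∀ s : Set X, s.Finite →
        ¬ (Set.univ : Set X) ⊆ ⋃ y ∈ s, ball y ε := by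
      rw [totallyBounded_iff] at hTB
      push_neg at hTB
      obtain ⟨ε, hε, h⟩ := hTB
      exact ⟨ε, hε, fun s hs => fun hc => h s hs hc⟩
    have key : ∀ t : List X, ∃ x : X, ∀ y ∈ t, ε ≤ dist x y := by
      intro t
      have := hno {y | y ∈ t} (t.finite_toSet)
      rw [Set.not_subset] at this
      obtain ⟨x, -, hx⟩ := this
      refine ⟨x, fun y hy => ?_⟩
      by_contra hc
      push_neg at hc
      exact hx (Set.mem_biUnion hy (mem_ball.mpr (by rwa [dist_comm] at hc ⊢)))
    choose g hg using key
    set xs : ℕ → X := sepSeq g with hxs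
    have hsep : ∀ m n : ℕ, m ≠ n → ε ≤ dist (xs m) (xs n) := by
      have base : ∀ m n : ℕ, m < n → ε ≤ dist (xs n) (xs m) := fun m n h =>
        hg (sepSet g n) (sepSeq g m) (sepSeq_mem g h)
      intro m n hmn
      rcases lt_or_gt_of_ne hmn with h | h
      · rw [dist_comm]; exact base m n h
      · exact base n m h
    -- the unbounded almost bounded continuous function
    set f : X → ℝ := fun z => ∑' n : ℕ, (n : ℝ) * bumpTerm ε (xs n) z with hf
    have hloc := bump_localize hε xs hsep
    have hfeq : ∀ y : X, ∀ n₀ : ℕ,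
        (∀ z ∈ ball y (ε / 8), ∀ m ≠ n₀, (m : ℝ) * bumpTerm ε (xs m) z = 0) →
        ∀ z ∈ ball y (ε / 8), f z = (n₀ : ℝ) * bumpTerm ε (xs n₀) z := by
      intro y n₀ h z hz
      exact tsum_eq_single n₀ (fun m hm => h z hz m hm)
    have hcont : Continuous f := by
      rw [continuous_iff_continuousAt]
      intro y
      obtain ⟨n₀, h⟩ := hloc y
      have hg : ContinuousAt (fun z => (n₀ : ℝ) * bumpTerm ε (xs n₀) z) y :=
        (continuous_const.mul (bumpTerm_continuous ε (xs n₀))).continuousAt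
      refine hg.congr ?_
      have hnb : ball y (ε / 8) ∈ nhds y := isOpen_ball.mem_nhds (mem_ball_self (by positivity))
      filter_upwards [hnb] with z hz
      exact (hfeq y n₀ h z hz).symm
    have hval : ∀ n : ℕ, 1 ≤ n → f (xs n) = n := by
      intro n hn
      obtain ⟨n₀, h⟩ := hloc (xs n)
      have hmem : xs n ∈ ball (xs n) (ε / 8) := mem_ball_self (by positivity)
      have hterm : (n : ℝ) * bumpTerm ε (xs n) (xs n) = n := by
        simp [bumpTerm, dist_self]
      have hn0 : n₀ = n := by
        by_contra hne
        have := h (xs n) hmem n (fun hc => hne hc.symm)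
        rw [hterm] at this
        exact absurd this (by exact_mod_cast Nat.one_le_iff_ne_zero.mp hn)
      rw [hfeq (xs n) n₀ h (xs n) hmem, hn0, hterm]
    have hab : AlmostBounded f := by
      intro ε' hε'
      refine ⟨ε / 8, by positivity, fun A hA => ?_⟩
      rcases A.eq_empty_or_nonempty with rfl | ⟨a, ha⟩
      · exact ⟨∅, by simp⟩
      obtain ⟨n₀, h⟩ := hloc a
      have hAsub : A ⊆ ball a (ε / 8) := by
        intro z hz
        have : edist z a ≤ EMetric.diam A := EMetric.edist_le_diam_of_mem hz ha
        have : edist z a < ENNReal.ofReal (ε / 8) := lt_of_le_of_lt this hA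
        exact mem_ball.mpr (by rwa [edist_lt_ofReal] at this)
      have himg : f '' A ⊆ Set.Icc 0 (n₀ : ℝ) := by
        rintro _ ⟨z, hz, rfl⟩
        rw [hfeq a n₀ h z (hAsub hz)]
        constructor
        · exact mul_nonneg (Nat.cast_nonneg _) (bumpTerm_nonneg _ _ _)
        · calc (n₀ : ℝ) * bumpTerm ε (xs n₀) z ≤ (n₀ : ℝ) * 1 :=
              mul_le_mul_of_nonneg_left (bumpTerm_le_one hε _ _) (Nat.cast_nonneg _)
          _ = n₀ := mul_one _
      obtain ⟨s, hsfin, hscov⟩ := totallyBounded_iff.mp (totallyBounded_Icc 0 (n₀ : ℝ)) ε' hε'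
      refine ⟨hsfin.toFinset, fun w hw => ?_⟩
      have := hscov (himg hw)
      simp only [Set.mem_iUnion] at this ⊢
      obtain ⟨b, hb, hwb⟩ := this
      exact ⟨b, hsfin.mem_toFinset.mpr hb, hwb⟩
    obtain ⟨M, hM⟩ := hbdd f hcont hab
    set n : ℕ := ⌈M⌉₊ + 1 with hn
    have h1 : f (xs n) = n := hval n (by omega)
    have := hM (xs n)
    rw [h1] at this
    have h2 : (M : ℝ) < n := by
      calc M ≤ ⌈M⌉₊ := Nat.le_ceil M
      _ < n := by exact_mod_cast Nat.lt_succ_self _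
    have h3 : |(n : ℝ)| = n := abs_of_nonneg (Nat.cast_nonneg _)
    rw [h3] at this
    linarith
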